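/- Combining the two previous bounds: under the hypotheses of Propositions 1 and 2, if q is a polynomial of degree at most N-1 with q(x_i) = f(x_i) at the k grid points, |q^{(m)}(x_{c,1}) - f^{(m)}(x_{c,1})| ≤ C h^{N-m} for m = 1,...,α, and |q^{(n)}(x_{c,2}) - f^{(n)}(x_{c,2})| ≤ C h^{N-n} for n = 1,...,β, then sup_{x ∈ [x_{c,1}, x_{c,2}]} |f(x) - q(x)| = O(h^N). -/

import Mathlib

open Polynomial

lemma polyContDiff (p : Polynomial ℝ) {n : WithTop ℕ∞} : ContDiff ℝ n (fun x : ℝ => p.eval x) := by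
  induction p using Polynomial.induction_on' with
  | add p q hp hq => simpa using hp.add hq
  | monomial k a => simpa [Polynomial.eval_monomial] using (contDiff_const (c := a)).mul (contDiff_id.pow k)

lemma polyIteratedDeriv (q : Polynomial ℝ) (n : ℕ) :
    iteratedDeriv n (fun x : ℝ => q.eval x) = fun x => (derivative^[n] q).eval x := by
  induction n with
  | zero => simp
  | succ n ih =>
    rw [iteratedDeriv_succ, ih]
    funext x
    rw [Function.iterate_succ_apply']
    exact Polynomial.deriv (p := derivative^[n] q)

lemma iteratedDeriv_sub' {n : ℕ} {f g : ℝ → ℝ} (hf : ContDiff ℝ n f) (hg : ContDiff ℝ n g) :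
    iteratedDeriv n (fun x => f x - g x) = fun x => iteratedDeriv n f x - iteratedDeriv n g x := by
  funext t
  rw [show (fun x => f x - g x) = f - g from rfl, ← iteratedDerivWithin_univ,
    ← iteratedDerivWithin_univ, ← iteratedDerivWithin_univ]
  exact iteratedDerivWithin_sub (Set.mem_univ t) uniqueDiffOn_univ hf.contDiffWithinAt hg.contDiffWithinAt

lemma itD_itD (f : ℝ → ℝ) (n i : ℕ) :
    iteratedDeriv i (iteratedDeriv n f) = iteratedDeriv (n + i) f := by
  induction i with
  | zero => simp
  | succ i ih => rw [iteratedDeriv_succ, ih, ← iteratedDeriv_succ]; ring_nf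

lemma myIDW {N n : ℕ} {f : ℝ → ℝ} (hf : ContDiff ℝ N f) (hn : n ≤ N)
    {s : Set ℝ} (hs : UniqueDiffOn ℝ s) {x : ℝ} (hx : x ∈ s) :
    iteratedDerivWithin n f s x = iteratedDeriv n f x := by
  have h1 : HasFTaylorSeriesUpToOn (N : ℕ∞) f (ftaylorSeries ℝ f) s :=
    (contDiff_iff_ftaylorSeries.mp (by exact_mod_cast hf)).hasFTaylorSeriesUpToOn s
  have h2 := h1.eq_iteratedFDerivWithin_of_uniqueDiffOn (m := n) (by exact_mod_cast hn) hs hx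
  rw [iteratedDerivWithin_eq_iteratedFDerivWithin, iteratedDeriv_eq_iteratedFDeriv, ← h2]
  rfl

noncomputable def Tpoly (d : ℕ → ℝ) (a : ℝ) (M : ℕ) : Polynomial ℝ :=
  ∑ j ∈ Finset.range M, Polynomial.C (d j / j.factorial) * (X - Polynomial.C a) ^ j

lemma Tpoly_natDegree (d : ℕ → ℝ) (a : ℝ) (M : ℕ) : (Tpoly d a M).natDegree ≤ M - 1 := by
  refine (Polynomial.natDegree_sum_le _ _).trans ?_
  rw [Finset.fold_max_le]
  constructor
  · exact Nat.zero_le _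
  · intro j hj
    simp only [Function.comp]
    refine (natDegree_mul_le).trans ?_
    have h1 : ((X - Polynomial.C a) ^ j).natDegree ≤ j := by
      refine (natDegree_pow_le).trans ?_
      simp [natDegree_X_sub_C]
    have := Finset.mem_range.mp hj
    simp only [natDegree_C, zero_add]
    omega

lemma Tpoly_derivative (d : ℕ → ℝ) (a : ℝ) (M : ℕ) :
    derivative (Tpoly d a M) = Tpoly (fun j => d (j + 1)) a (M - 1) := by
  cases M with
  | zero => simp [Tpoly]
  | succ M =>
    unfold Tpoly
    rw [map_sum, Finset.sum_range_succ']
    simp only [pow_zero, mul_one, derivative_C, add_zero]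
    rw [Nat.succ_sub_one]
    refine Finset.sum_congr rfl fun j _ => ?_
    rw [derivative_C_mul, derivative_pow, derivative_sub, derivative_X, derivative_C, sub_zero,
      mul_one, Nat.add_sub_cancel, ← mul_assoc, ← Polynomial.C_mul]
    congr 2
    rw [Nat.factorial_succ]
    push_cast
    have hj : (j : ℝ) + 1 ≠ 0 := by positivity
    field_simp

lemma Tpoly_iterate (d : ℕ → ℝ) (a : ℝ) (M n : ℕ) :
    derivative^[n] (Tpoly d a M) = Tpoly (fun j => d (n + j)) a (M - n) := by
  induction n with
  | zero => simp
  | succ n ih =>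
    rw [Function.iterate_succ_apply', ih, Tpoly_derivative]
    have : (fun j => d (n + (j + 1))) = fun j => d (n + 1 + j) := by
      funext j; congr 1; omega
    rw [this, Nat.sub_sub]

lemma Tpoly_eval_self (d : ℕ → ℝ) (a : ℝ) (M : ℕ) (hM : 0 < M) :
    (Tpoly d a M).eval a = d 0 := by
  unfold Tpoly
  rw [Polynomial.eval_finset_sum]
  rw [Finset.sum_eq_single 0]
  · simp
  · intro j _ hj
    simp [sub_self, zero_pow hj]
  · intro h; exact absurd (Finset.mem_range.mpr hM) h

lemma Tpoly_deriv_eval_self (d : ℕ → ℝ) (a : ℝ) (M n : ℕ) (hn : n < M) :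
    (derivative^[n] (Tpoly d a M)).eval a = d n := by
  rw [Tpoly_iterate, Tpoly_eval_self _ _ _ (by omega)]
  ring_nf

lemma Tpoly_comp_iterate (T : Polynomial ℝ) (h : ℝ) (m : ℕ) :
    derivative^[m] (T.comp (Polynomial.C h * X)) =
      Polynomial.C (h ^ m) * ((derivative^[m] T).comp (Polynomial.C h * X)) := by
  induction m with
  | zero => simp
  | succ m ih =>
    rw [Function.iterate_succ_apply', ih, derivative_C_mul, derivative_comp,
      Function.iterate_succ_apply']
    rw [show derivative (Polynomial.C h * X) = Polynomial.C h by simp]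
    rw [← mul_assoc, ← Polynomial.C_mul, pow_succ]

lemma contDiff_iteratedDeriv_of_le {N n : ℕ} {g : ℝ → ℝ} (hg : ContDiff ℝ N g) (hn : n ≤ N) :
    ContDiff ℝ ((N - n : ℕ) : WithTop ℕ∞) (iteratedDeriv n g) := by
  rw [iteratedDeriv_eq_iterate]
  refine ContDiff.iterate_deriv' _ _ ?_
  have : N - n + n = N := by omega
  rw [this]
  exact hg

lemma taylor_err {N : ℕ} {g : ℝ → ℝ} (hg : ContDiff ℝ N g) {a b : ℝ} (hab : a < b)
    {M : ℝ} (hM : ∀ t ∈ Set.Icc a b, |iteratedDeriv N g t| ≤ M)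
    (n : ℕ) (hn : n < N) (x : ℝ) (hx : x ∈ Set.Icc a b) :
    |iteratedDeriv n g x -
        (derivative^[n] (Tpoly (fun j => iteratedDeriv j g a) a N)).eval x|
      ≤ M * (b - a) ^ (N - n) / (N - n).factorial := by
  have hM0 : 0 ≤ M := le_trans (abs_nonneg _) (hM a ⟨le_refl a, hab.le⟩)
  have hfac : (0:ℝ) < (N - n).factorial := by exact_mod_cast (N - n).factorial_pos
  have hba : 0 ≤ b - a := by linarith [hab.le]
  have hRHS : 0 ≤ M * (b - a) ^ (N - n) / (N - n).factorial := by positivity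
  rcases eq_or_lt_of_le hx.1 with heq | hax
  · rw [← heq, Tpoly_deriv_eval_self _ _ _ _ hn, sub_self, abs_zero]
    exact hRHS
  -- a < x
  have hgn : ContDiff ℝ ((N - n : ℕ) : WithTop ℕ∞) (iteratedDeriv n g) :=
    contDiff_iteratedDeriv_of_le hg hn.le
  have hud : UniqueDiffOn ℝ (Set.Icc a x) := uniqueDiffOn_Icc hax
  have hcd : ContDiffOn ℝ (N - n - 1 : ℕ) (iteratedDeriv n g) (Set.Icc a x) :=
    (hgn.of_le (by exact_mod_cast Nat.cast_le.mpr (by omega : N - n - 1 ≤ N - n))).contDiffOn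
  have hdiff : DifferentiableOn ℝ
      (iteratedDerivWithin (N - n - 1) (iteratedDeriv n g) (Set.Icc a x)) (Set.Ioo a x) := by
    have hglob : Differentiable ℝ (iteratedDeriv (N - n - 1) (iteratedDeriv n g)) := by
      refine (contDiff_iteratedDeriv_of_le hgn ?_).differentiable ?_
      · omega
      · have : (1:ℕ) ≤ N - n - (N - n - 1) := by omega
        exact_mod_cast (by omega : N - n - (N - n - 1) ≠ 0)
    refine (hglob.differentiableOn).congr ?_
    intro t ht
    exact myIDW hgn (by omega) hud (Set.Ioo_subset_Icc_self ht)
  obtain ⟨ξ, hξ, hfeq⟩ := taylor_mean_remainder_lagrange (n := N - n - 1) hax.ne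
    (by rwa [Set.uIcc_of_le hax.le]) (by rwa [Set.uIcc_of_le hax.le, Set.uIoo_of_le hax.le])
  rw [Set.uIcc_of_le hax.le] at hfeq
  rw [Set.uIoo_of_le hax.le] at hξ
  have hNn : N - n - 1 + 1 = N - n := by omega
  -- identify the taylor polynomial with Tpoly
  have htay : taylorWithinEval (iteratedDeriv n g) (N - n - 1) (Set.Icc a x) a x =
      (derivative^[n] (Tpoly (fun j => iteratedDeriv j g a) a N)).eval x := by
    rw [Tpoly_iterate, taylor_within_apply]
    unfold Tpoly
    rw [Polynomial.eval_finset_sum, hNn]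
    refine Finset.sum_congr rfl fun i hi => ?_
    have hiN : i ≤ N - n := (Finset.mem_range.mp hi).le
    have h1 : iteratedDerivWithin i (iteratedDeriv n g) (Set.Icc a x) a =
        iteratedDeriv (n + i) g a := by
      rw [myIDW hgn (by omega) hud (Set.left_mem_Icc.mpr hax.le), itD_itD]
    rw [h1]
    simp only [Polynomial.eval_mul, Polynomial.eval_pow, Polynomial.eval_sub, Polynomial.eval_X,
      Polynomial.eval_C, smul_eq_mul]
    ring
  rw [← htay, hfeq]
  -- bound the remainder
  have hξ' : ξ ∈ Set.Icc a b := ⟨(hξ.1).le, le_trans (hξ.2).le hx.2⟩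
  have h2 : iteratedDerivWithin (N - n - 1 + 1) (iteratedDeriv n g) (Set.Icc a x) ξ =
      iteratedDeriv N g ξ := by
    rw [hNn, myIDW hgn (le_refl _) hud (Set.Ioo_subset_Icc_self hξ), itD_itD]
    congr 1
    omega
  rw [h2, hNn, abs_div, abs_mul, abs_pow,
    abs_of_nonneg (by positivity : (0:ℝ) ≤ ((N - n).factorial : ℝ)),
    abs_of_nonneg (sub_nonneg.mpr hax.le)]
  have h3 : 0 ≤ x - a := by linarith
  have h4 : x - a ≤ b - a := by linarith [hx.2]
  have h5 := hM ξ hξ'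
  have h6 : |iteratedDeriv N g ξ| * (x - a) ^ (N - n) ≤ M * (b - a) ^ (N - n) := by
    apply mul_le_mul h5 (pow_le_pow_left₀ h3 h4 _) (by positivity) hM0
  exact by gcongr


noncomputable def evalMap (k α β : ℕ) (y : Fin k → ℝ) (c₁ c₂ : ℝ) :
    Polynomial ℝ →ₗ[ℝ] ((Fin k ⊕ (Fin α ⊕ Fin β)) → ℝ) where
  toFun q := Sum.elim (fun i => q.eval (y i))
    (Sum.elim (fun m => (derivative^[(m : ℕ) + 1] q).eval c₁)
      (fun n => (derivative^[(n : ℕ) + 1] q).eval c₂))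
  map_add' p q := by
    have hD : ∀ (j : ℕ) (p q : Polynomial ℝ),
        derivative^[j] (p + q) = derivative^[j] p + derivative^[j] q := by
      intro j p q; simp_rw [← Module.End.pow_apply, map_add]
    funext j
    rcases j with i | m | n <;> simp [hD]
  map_smul' c q := by
    funext j
    rcases j with i | m | n <;>
      simp [Polynomial.iterate_derivative_smul]

lemma normequiv (N k α β : ℕ) (hN : 0 < N) (hsum : α + β + k = N)
    (y : Fin k → ℝ) (c₁ c₂ : ℝ) (hc : c₁ ≤ c₂)
    (huniq : ∀ q : Polynomial ℝ, q.natDegree ≤ N - 1 →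
      (∀ i, q.eval (y i) = 0) →
      (∀ m ∈ Finset.Icc 1 α, (Polynomial.derivative^[m] q).eval c₁ = 0) →
      (∀ n ∈ Finset.Icc 1 β, (Polynomial.derivative^[n] q).eval c₂ = 0) → q = 0) :
    ∃ K : ℝ, 0 ≤ K ∧ ∀ Q : Polynomial ℝ, Q.natDegree ≤ N - 1 → ∀ ε : ℝ, 0 ≤ ε →
      (∀ i, |Q.eval (y i)| ≤ ε) →
      (∀ m ∈ Finset.Icc 1 α, |(Polynomial.derivative^[m] Q).eval c₁| ≤ ε) →
      (∀ n ∈ Finset.Icc 1 β, |(Polynomial.derivative^[n] Q).eval c₂| ≤ ε) →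
      ∀ t ∈ Set.Icc c₁ c₂, |Q.eval t| ≤ K * ε := by
  classical
  set ι := (Fin k ⊕ (Fin α ⊕ Fin β))
  set L₀ := evalMap k α β y c₁ c₂ with hL₀
  -- the linear map from coefficient space
  set E : (Fin N → ℝ) →ₗ[ℝ] (ι → ℝ) :=
    L₀.comp ((Polynomial.degreeLT ℝ N).subtype.comp
      (Polynomial.degreeLTEquiv ℝ N).symm.toLinearMap) with hE
  have hmem : ∀ Q : Polynomial ℝ, Q.natDegree ≤ N - 1 → Q ∈ Polynomial.degreeLT ℝ N := by
    intro Q hQ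
    rw [Polynomial.mem_degreeLT]
    calc Q.degree ≤ (Q.natDegree : WithBot ℕ) := Polynomial.degree_le_natDegree
    _ < (N : WithBot ℕ) := by exact_mod_cast (by omega : Q.natDegree < N)
  have hEinj : Function.Injective E := by
    rw [← LinearMap.ker_eq_bot, LinearMap.ker_eq_bot']
    intro v hv
    set Qs := (Polynomial.degreeLTEquiv ℝ N).symm v with hQs
    have hdeg : (Qs : Polynomial ℝ).natDegree ≤ N - 1 := by
      have := Polynomial.mem_degreeLT.mp Qs.2
      rcases eq_or_ne (Qs : Polynomial ℝ) 0 with h0 | h0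
      · rw [h0]; simp
      · have := (Polynomial.natDegree_lt_iff_degree_lt h0).mpr this
        omega
    have hvals : L₀ (Qs : Polynomial ℝ) = 0 := hv
    have hQ0 : (Qs : Polynomial ℝ) = 0 := by
      apply huniq _ hdeg
      · intro i
        have := congrFun hvals (Sum.inl i)
        simpa [hL₀, evalMap] using this
      · intro m hm
        obtain ⟨hm1, hm2⟩ := Finset.mem_Icc.mp hm
        have := congrFun hvals (Sum.inr (Sum.inl ⟨m - 1, by omega⟩))
        rw [show m = m - 1 + 1 by omega]
        simpa [hL₀, evalMap] using this
      · intro n hn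
        obtain ⟨hn1, hn2⟩ := Finset.mem_Icc.mp hn
        have := congrFun hvals (Sum.inr (Sum.inr ⟨n - 1, by omega⟩))
        rw [show n = n - 1 + 1 by omega]
        simpa [hL₀, evalMap] using this
    have : Qs = 0 := Subtype.ext hQ0
    have := congrArg (Polynomial.degreeLTEquiv ℝ N) this
    rw [hQs] at this
    simpa using this
  have hdim : Module.finrank ℝ (Fin N → ℝ) = Module.finrank ℝ (ι → ℝ) := by
    rw [Module.finrank_fin_fun, Module.finrank_fintype_fun_eq_card]
    simp only [ι, Fintype.card_sum, Fintype.card_fin]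
    omega
  set e := E.linearEquivOfInjective hEinj hdim with he
  -- basis polynomials
  set p : ι → Polynomial ℝ := fun j =>
    ((Polynomial.degreeLTEquiv ℝ N).symm (e.symm (Pi.single j 1)) : Polynomial ℝ) with hp
  -- bounds for basis polynomials
  have hbound : ∀ j : ι, ∃ B : ℝ, 0 ≤ B ∧ ∀ t ∈ Set.Icc c₁ c₂, |(p j).eval t| ≤ B := by
    intro j
    obtain ⟨t₀, ht₀, hmax⟩ := isCompact_Icc.exists_isMaxOn (Set.nonempty_Icc.mpr hc)
      ((p j).continuous.abs.continuousOn (s := Set.Icc c₁ c₂))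
    exact ⟨|(p j).eval t₀|, abs_nonneg _, fun t ht => hmax ht⟩
  choose B hB0 hBle using hbound
  refine ⟨∑ j : ι, B j, Finset.sum_nonneg fun j _ => hB0 j, ?_⟩
  intro Q hQdeg ε hε h0 h1 h2 t ht
  -- decompose Q in terms of the basis
  have hQmem := hmem Q hQdeg
  set v : ι → ℝ := L₀ Q with hv
  have hQrep : Q = ∑ j : ι, v j • p j := by
    have h1' : e ((Polynomial.degreeLTEquiv ℝ N) ⟨Q, hQmem⟩) = v := by
      rw [he, E.linearEquivOfInjective_apply]
      simp [hE]
      exact hv.symm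
    have h2' : (⟨Q, hQmem⟩ : Polynomial.degreeLT ℝ N) =
        (Polynomial.degreeLTEquiv ℝ N).symm (e.symm v) := by
      rw [← h1']; simp
    have h3' : e.symm v = ∑ j : ι, v j • e.symm (Pi.single j 1) := by
      have : v = ∑ j : ι, v j • (Pi.single j (1:ℝ) : ι → ℝ) := by
        funext i
        rw [Finset.sum_apply, Finset.sum_eq_single i]
        · simp
        · intro j _ hj
          simp [Pi.single_apply, Ne.symm hj]
        · simp
      conv_lhs => rw [this]
      rw [map_sum]
      simp
    have h4' := congrArg (fun z => ((Polynomial.degreeLTEquiv ℝ N).symm z : Polynomial ℝ)) h3'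
    rw [← h2'] at h4'
    simp only [map_sum, map_smul] at h4'
    simpa [hp] using h4'
  -- bound each coefficient
  have hcoef : ∀ j : ι, |v j| ≤ ε := by
    intro j
    rcases j with i | m | n
    · exact h0 i
    · exact h1 (m + 1) (Finset.mem_Icc.mpr ⟨by omega, by omega⟩)
    · exact h2 (n + 1) (Finset.mem_Icc.mpr ⟨by omega, by omega⟩)
  calc |Q.eval t| = |∑ j : ι, v j * (p j).eval t| := by
        rw [hQrep]
        simp [Polynomial.eval_finset_sum]
    _ ≤ ∑ j : ι, |v j * (p j).eval t| := Finset.abs_sum_le_sum_abs _ _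
    _ ≤ ∑ j : ι, B j * ε := by
        refine Finset.sum_le_sum fun j _ => ?_
        rw [abs_mul, mul_comm (B j) ε]
        exact mul_le_mul (hcoef j) (hBle j t ht) (abs_nonneg _) hε
    _ = (∑ j : ι, B j) * ε := by rw [← Finset.sum_mul]


set_option maxHeartbeats 1000000 in
/-- Combining Propositions 1 and 2: a polynomial `q` of degree `≤ N-1` interpolating `f` at the
`k` scaled grid points and matching its derivatives at the two control points up to errors
`C h^{N-m}` approximates `f` to order `O(h^N)` on `[h·c₁, h·c₂]`. -/
theorem hermite_like_approximation_order
    (N k α β : ℕ) (hN : 0 < N) (hsum : α + β + k = N)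
    (y : Fin k → ℝ) (hy_inj : Function.Injective y)
    (c₁ c₂ : ℝ) (hc : c₁ < c₂)
    (hbox : ∀ i, y i ∈ Set.Ioo c₁ c₂ ∧ c₂ - c₁ ≤ 1)
    (huniq : ∀ q : Polynomial ℝ, q.natDegree ≤ N - 1 →
      (∀ i, q.eval (y i) = 0) →
      (∀ m ∈ Finset.Icc 1 α, (Polynomial.derivative^[m] q).eval c₁ = 0) →
      (∀ n ∈ Finset.Icc 1 β, (Polynomial.derivative^[n] q).eval c₂ = 0) → q = 0)
    (f : ℝ → ℝ) (hf : ContDiff ℝ N f)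
    (C : ℝ) (hC : 0 ≤ C) :
    ∃ C'' : ℝ, 0 ≤ C'' ∧ ∀ h ∈ Set.Ioc (0 : ℝ) 1,
      ∀ q : Polynomial ℝ, q.natDegree ≤ N - 1 →
        (∀ i, q.eval (h * y i) = f (h * y i)) →
        (∀ m ∈ Finset.Icc 1 α,
          |(Polynomial.derivative^[m] q).eval (h * c₁) - iteratedDeriv m f (h * c₁)|
            ≤ C * h ^ (N - m)) →
        (∀ n ∈ Finset.Icc 1 β,
          |(Polynomial.derivative^[n] q).eval (h * c₂) - iteratedDeriv n f (h * c₂)|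
            ≤ C * h ^ (N - n)) →
        ∀ x ∈ Set.Icc (h * c₁) (h * c₂), |f x - q.eval x| ≤ C'' * h ^ N := by
  have hαN : α ≤ N := by omega
  have hβN : β ≤ N := by omega
  -- bound for the N-th derivative of f on a fixed compact set
  set R : ℝ := |c₁| + |c₂| with hR
  have hRnn : 0 ≤ R := by positivity
  have hfN : Continuous (iteratedDeriv N f) := hf.continuous_iteratedDeriv N (le_refl _)
  obtain ⟨tM, htM, htMmax⟩ := isCompact_Icc.exists_isMaxOn
    (Set.nonempty_Icc.mpr (by linarith : -R ≤ R)) (hfN.abs.continuousOn (s := Set.Icc (-R) R))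
  set M : ℝ := |iteratedDeriv N f tM| with hMdef
  have hM0 : 0 ≤ M := abs_nonneg _
  have hMb : ∀ t ∈ Set.Icc (-R) R, |iteratedDeriv N f t| ≤ M := fun t ht => htMmax ht
  obtain ⟨K, hK0, hKb⟩ := normequiv N k α β hN hsum y c₁ c₂ hc.le huniq
  set E₁ : ℝ := (max (c₂ - c₁) 1) ^ N with hE₁def
  have hmax1 : (1:ℝ) ≤ max (c₂ - c₁) 1 := le_max_right _ _
  have hE₁1 : 1 ≤ E₁ := one_le_pow₀ hmax1
  have hE₁0 : 0 ≤ E₁ := by linarith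
  set A : ℝ := C + M * E₁ with hAdef
  have hA0 : 0 ≤ A := add_nonneg hC (mul_nonneg hM0 hE₁0)
  refine ⟨K * A + M * E₁, by positivity, ?_⟩
  rintro h ⟨h0, h1⟩ q hqdeg hq0 hq1 hq2 x hx
  set a : ℝ := h * c₁ with ha
  set b : ℝ := h * c₂ with hb
  have hab : a < b := by
    rw [ha, hb]; exact mul_lt_mul_of_pos_left hc h0
  have hply : ContDiff ℝ N (fun t : ℝ => q.eval t) := polyContDiff q
  set g : ℝ → ℝ := fun t => f t - q.eval t with hg
  have hgC : ContDiff ℝ N g := hf.sub hply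
  have hgd : ∀ j, j ≤ N → ∀ t, iteratedDeriv j g t
      = iteratedDeriv j f t - (derivative^[j] q).eval t := by
    intro j hj t
    have h1' := congrFun (iteratedDeriv_sub' (f := f) (g := fun t => q.eval t)
      (hf.of_le (by exact_mod_cast hj)) (polyContDiff q)) t
    have h2' := congrFun (polyIteratedDeriv q j) t
    simp only [hg]
    rw [h1', h2']
  -- the interval [a,b] is contained in the fixed compact set
  have hsubJ : Set.Icc a b ⊆ Set.Icc (-R) R := by
    intro t ht
    obtain ⟨ht1, ht2⟩ := ht
    have e1 : h * (-|c₁|) ≤ h * c₁ := mul_le_mul_of_nonneg_left (neg_abs_le c₁) h0.le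
    have e2 : h * |c₁| ≤ |c₁| := mul_le_of_le_one_left (abs_nonneg c₁) h1
    have e3 : h * c₂ ≤ h * |c₂| := mul_le_mul_of_nonneg_left (le_abs_self c₂) h0.le
    have e4 : h * |c₂| ≤ |c₂| := mul_le_of_le_one_left (abs_nonneg c₂) h1
    have e5 : h * (-|c₁|) = -(h * |c₁|) := by ring
    constructor
    · rw [hR]
      rw [ha] at ht1
      have := abs_nonneg c₂
      nlinarith
    · rw [hR]
      rw [hb] at ht2
      have := abs_nonneg c₁
      nlinarith
  have hqN : derivative^[N] q = 0 :=
    Polynomial.iterate_derivative_eq_zero (by omega : q.natDegree < N)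
  have hMg : ∀ t ∈ Set.Icc a b, |iteratedDeriv N g t| ≤ M := by
    intro t ht
    rw [hgd N (le_refl N) t, hqN]
    simpa using hMb t (hsubJ ht)
  set d : ℕ → ℝ := fun j => iteratedDeriv j g a with hd
  set T : Polynomial ℝ := Tpoly d a N with hT
  have hTdeg : T.natDegree ≤ N - 1 := Tpoly_natDegree _ _ _
  have hba : b - a = h * (c₂ - c₁) := by rw [ha, hb]; ring
  have hrem : ∀ n < N, ∀ t ∈ Set.Icc a b,
      |iteratedDeriv n g t - (derivative^[n] T).eval t| ≤ M * E₁ * h ^ (N - n) := by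
    intro n hn t ht
    refine (taylor_err hgC hab hMg n hn t ht).trans ?_
    have hfac1 : (1:ℝ) ≤ (N - n).factorial := by exact_mod_cast (N - n).factorial_pos
    have hba0 : 0 ≤ b - a := by linarith
    have step1 : M * (b - a) ^ (N - n) / (N - n).factorial ≤ M * (b - a) ^ (N - n) := by
      apply div_le_self (by positivity) hfac1
    refine step1.trans ?_
    have hcc : 0 ≤ c₂ - c₁ := by linarith
    have hz : (c₂ - c₁) ^ (N - n) ≤ E₁ := by
      calc (c₂ - c₁) ^ (N - n) ≤ (max (c₂ - c₁) 1) ^ (N - n) :=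
            pow_le_pow_left₀ hcc (le_max_left _ _) _
        _ ≤ (max (c₂ - c₁) 1) ^ N := pow_le_pow_right₀ hmax1 (by omega)
    have hpow : (b - a) ^ (N - n) = h ^ (N - n) * (c₂ - c₁) ^ (N - n) := by
      rw [hba, mul_pow]
    rw [hpow]
    have hhn : 0 ≤ h ^ (N - n) := by positivity
    nlinarith [mul_nonneg (mul_nonneg hM0 hhn) (sub_nonneg.mpr hz)]
  set Q : Polynomial ℝ := T.comp (Polynomial.C h * X) with hQ
  have hQdeg : Q.natDegree ≤ N - 1 := by
    have h1' : Q.natDegree ≤ T.natDegree * (Polynomial.C h * X).natDegree :=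
      Polynomial.natDegree_comp_le
    rw [Polynomial.natDegree_C_mul_X h (ne_of_gt h0), mul_one] at h1'
    exact h1'.trans hTdeg
  have hQeval : ∀ t : ℝ, Q.eval t = T.eval (h * t) := by
    intro t; rw [hQ]; simp [Polynomial.eval_comp]
  have hQder : ∀ (m : ℕ) (c : ℝ),
      (derivative^[m] Q).eval c = h ^ m * (derivative^[m] T).eval (h * c) := by
    intro m c
    rw [hQ, Tpoly_comp_iterate]
    simp [Polynomial.eval_comp]
  have hhN : (0:ℝ) < h ^ N := by positivity
  -- component bounds
  have hB0' : ∀ i, |Q.eval (y i)| ≤ A * h ^ N := by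
    intro i
    rw [hQeval]
    obtain ⟨hyi, -⟩ := hbox i
    have hyin : h * y i ∈ Set.Icc a b :=
      ⟨mul_le_mul_of_nonneg_left hyi.1.le h0.le, mul_le_mul_of_nonneg_left hyi.2.le h0.le⟩
    have h00 := hrem 0 hN (h * y i) hyin
    simp only [iteratedDeriv_zero, Function.iterate_zero, id_eq, Nat.sub_zero] at h00
    have hg0 : g (h * y i) = 0 := by simp [hg, hq0 i]
    rw [hg0, zero_sub, abs_neg] at h00
    refine h00.trans ?_
    rw [hAdef]
    have hCh : 0 ≤ C * h ^ N := mul_nonneg hC hhN.le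
    linarith
  have hB1' : ∀ m ∈ Finset.Icc 1 α, |(derivative^[m] Q).eval c₁| ≤ A * h ^ N := by
    intro m hm
    obtain ⟨hm1, hm2⟩ := Finset.mem_Icc.mp hm
    have hmN : m ≤ N := hm2.trans hαN
    rw [hQder, ← ha]
    rcases eq_or_lt_of_le hmN with heq | hlt
    · have hz : derivative^[m] T = 0 :=
        Polynomial.iterate_derivative_eq_zero (by omega : T.natDegree < m)
      rw [hz]
      simp only [Polynomial.eval_zero, mul_zero, abs_zero]
      positivity
    · rw [hT, Tpoly_deriv_eval_self _ _ _ _ hlt]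
      have hdm : |d m| ≤ C * h ^ (N - m) := by
        rw [hd]
        simp only
        rw [hgd m hmN a, abs_sub_comm, ha]
        exact hq1 m hm
      rw [abs_mul, abs_of_nonneg (by positivity : (0:ℝ) ≤ h ^ m)]
      calc h ^ m * |d m| ≤ h ^ m * (C * h ^ (N - m)) :=
            mul_le_mul_of_nonneg_left hdm (by positivity)
        _ = C * (h ^ m * h ^ (N - m)) := by ring
        _ = C * h ^ N := by rw [← pow_add, show m + (N - m) = N by omega]
        _ ≤ A * h ^ N := by nlinarith [hhN.le, mul_nonneg hM0 hE₁0]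
  have hB2' : ∀ n ∈ Finset.Icc 1 β, |(derivative^[n] Q).eval c₂| ≤ A * h ^ N := by
    intro m hm
    obtain ⟨hm1, hm2⟩ := Finset.mem_Icc.mp hm
    have hmN : m ≤ N := hm2.trans hβN
    rw [hQder, ← hb]
    rcases eq_or_lt_of_le hmN with heq | hlt
    · have hz : derivative^[m] T = 0 :=
        Polynomial.iterate_derivative_eq_zero (by omega : T.natDegree < m)
      rw [hz]
      simp only [Polynomial.eval_zero, mul_zero, abs_zero]
      positivity
    · have hbb : b ∈ Set.Icc a b := ⟨hab.le, le_refl b⟩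
      have hr := hrem m hlt b hbb
      have hgb : |iteratedDeriv m g b| ≤ C * h ^ (N - m) := by
        rw [hgd m hmN b, abs_sub_comm, hb]
        exact hq2 m hm
      have htri : |(derivative^[m] T).eval b| ≤ C * h ^ (N - m) + M * E₁ * h ^ (N - m) := by
        have := abs_sub_abs_le_abs_sub (iteratedDeriv m g b) ((derivative^[m] T).eval b)
        have h2' := abs_sub_comm (iteratedDeriv m g b) ((derivative^[m] T).eval b)
        linarith [neg_abs_le (iteratedDeriv m g b - (derivative^[m] T).eval b),
          abs_sub_abs_le_abs_sub ((derivative^[m] T).eval b) (iteratedDeriv m g b)]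
      rw [abs_mul, abs_of_nonneg (by positivity : (0:ℝ) ≤ h ^ m)]
      calc h ^ m * |(derivative^[m] T).eval b|
          ≤ h ^ m * ((C + M * E₁) * h ^ (N - m)) := by
            refine mul_le_mul_of_nonneg_left ?_ (by positivity)
            linarith
        _ = (C + M * E₁) * (h ^ m * h ^ (N - m)) := by ring
        _ = A * h ^ N := by rw [← pow_add, show m + (N - m) = N by omega, hAdef]
  have hQb := hKb Q hQdeg (A * h ^ N) (by positivity) hB0' hB1' hB2'
  -- conclude
  set t : ℝ := x / h with ht
  have htmem : t ∈ Set.Icc c₁ c₂ := by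
    constructor
    · rw [ht, le_div_iff₀ h0, mul_comm]
      exact hx.1
    · rw [ht, div_le_iff₀ h0, mul_comm]
      exact hx.2
  have hxt : h * t = x := by
    rw [ht]; field_simp
  have h00 := hrem 0 hN x hx
  simp only [iteratedDeriv_zero, Function.iterate_zero, id_eq, Nat.sub_zero] at h00
  have hQx := hQb t htmem
  rw [hQeval, hxt] at hQx
  have hgx : g x = f x - q.eval x := rfl
  have htri := abs_add_le (g x - T.eval x) (T.eval x)
  rw [sub_add_cancel] at htri
  rw [← hgx]
  calc |g x| ≤ |g x - T.eval x| + |T.eval x| := htri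
    _ ≤ M * E₁ * h ^ N + K * (A * h ^ N) := add_le_add h00 hQx
    _ = (K * A + M * E₁) * h ^ N := by ring
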